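/- For n ≥ 2 and an odd nonnegative integer b with b' = ⌊b/2⌋, the number of nonnegative integer solutions of x_1 + x_2 + ... + x_{n−1} + 2 x_n = b equals ∑_{k=0}^{⌊(n−2)/2⌋} C(n−1, 2k+1) · C(b'−k+1; n−1), where C(m; n−1) = (1/(n−1)!)·m(m+1)···(m+n−2) if m > 0 and 0 otherwise. -/
import Mathlib

set_option linter.unnecessarySeqFocus false

open Finset

noncomputable def tupleEquivSym (M t : ℕ) :
    {f : Fin M → ℕ // ∑ i, f i = t} ≃ Sym (Fin M) t :=
  Equiv.subtypeEquiv
    (Finsupp.equivFunOnFinite.symm.trans Multiset.toFinsupp.symm.toEquiv)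
    (fun f => by
      simp [Multiset.toFinsupp_symm_apply, Finsupp.card_toMultiset,
        Finsupp.sum_fintype, Function.id_def])

lemma card_tuple (M t : ℕ) :
    Nat.card {f : Fin M → ℕ // ∑ i, f i = t} = (M + t - 1).choose t := by
  rw [Nat.card_congr (tupleEquivSym M t), Nat.card_eq_fintype_card,
    Sym.card_sym_eq_choose, Fintype.card_fin]

instance tupleFinite (M t : ℕ) : Finite {f : Fin M → ℕ // ∑ i, f i = t} :=
  Finite.of_equiv _ (tupleEquivSym M t).symm

def pairEquiv (m t : ℕ) :
    {q : (Fin m → ℕ) × ℕ // (∑ i, q.1 i) + q.2 = t} ≃ {f : Fin (m+1) → ℕ // ∑ i, f i = t} where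
  toFun q := ⟨Fin.cons q.1.2 q.1.1, by rw [Fin.sum_cons]; have := q.2; omega⟩
  invFun f := ⟨(fun i => f.1 i.succ, f.1 0), by
    show (∑ i : Fin m, f.1 i.succ) + f.1 0 = t
    have h := f.2; rw [Fin.sum_univ_succ] at h; omega⟩
  left_inv q := by
    apply Subtype.ext
    apply Prod.ext
    · funext i; simp
    · simp
  right_inv f := by
    apply Subtype.ext
    funext i
    refine Fin.cases ?_ (fun j => ?_) i <;> simp

lemma card_pair (m t : ℕ) :
    Nat.card {q : (Fin m → ℕ) × ℕ // (∑ i, q.1 i) + q.2 = t} = (m + 1 + t - 1).choose t := by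
  rw [Nat.card_congr (pairEquiv m t), card_tuple]

instance pairFinite (m t : ℕ) : Finite {q : (Fin m → ℕ) × ℕ // (∑ i, q.1 i) + q.2 = t} :=
  Finite.of_equiv _ (pairEquiv m t).symm

def fiberEquiv (m c B t : ℕ) (h : 2*t + c = B) :
    {q : (Fin m → ℕ) × ℕ // 2*((∑ i, q.1 i) + q.2) + c = B} ≃
    {q : (Fin m → ℕ) × ℕ // (∑ i, q.1 i) + q.2 = t} :=
  Equiv.subtypeEquivRight fun q => by omega

lemma fiber_finite (m c B : ℕ) :
    Finite {q : (Fin m → ℕ) × ℕ // 2*((∑ i, q.1 i) + q.2) + c = B} := by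
  by_cases h : ∃ t, 2*t + c = B
  · obtain ⟨t, ht⟩ := h
    exact Finite.of_equiv _ (fiberEquiv m c B t ht).symm
  · haveI : IsEmpty {q : (Fin m → ℕ) × ℕ // 2*((∑ i, q.1 i) + q.2) + c = B} :=
      ⟨fun q => h ⟨_, q.2⟩⟩
    infer_instance

lemma nat_card_sigma {ι : Type*} [Fintype ι] (α : ι → Type*) [∀ i, Finite (α i)] :
    Nat.card (Σ i, α i) = ∑ i, Nat.card (α i) := by
  haveI : ∀ i, Fintype (α i) := fun i => Fintype.ofFinite _
  rw [Nat.card_eq_fintype_card, Fintype.card_sigma]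
  exact Finset.sum_congr rfl fun i _ => (Nat.card_eq_fintype_card).symm

lemma sum_odd_aux (f : ℕ → ℕ) (hf : ∀ c, ¬ Odd c → f c = 0) :
    ∀ K, ∑ c ∈ Finset.range (2*K+1), f c = ∑ k ∈ Finset.range K, f (2*k+1)
  | 0 => by simpa using hf 0 (by decide)
  | K+1 => by
    have h1 : 2*(K+1)+1 = (2*K+1) + 1 + 1 := by ring
    rw [h1, Finset.sum_range_succ, Finset.sum_range_succ, sum_odd_aux f hf K,
      Finset.sum_range_succ, hf (2*K+1+1) (by simp [Nat.odd_iff]; omega), add_zero]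

lemma split_aux (a : ℕ) : a = 2 * (a / 2) + (if a % 2 = 1 then 1 else 0) := by
  split <;> omega

def mainEquiv (m B : ℕ) :
    {p : (Fin m → ℕ) × ℕ // (∑ i, p.1 i) + 2 * p.2 = B} ≃
    Σ S : Finset (Fin m), {q : (Fin m → ℕ) × ℕ // 2*((∑ i, q.1 i) + q.2) + S.card = B} where
  toFun p := ⟨Finset.univ.filter (fun i => p.1.1 i % 2 = 1),
    ⟨(fun i => p.1.1 i / 2, p.1.2), by
      dsimp only
      have key : ∑ i, p.1.1 i =
          2 * (∑ i, p.1.1 i / 2) + (Finset.univ.filter (fun i => p.1.1 i % 2 = 1)).card := by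
        rw [Finset.card_filter, Finset.mul_sum, ← Finset.sum_add_distrib]
        exact Finset.sum_congr rfl fun i _ => split_aux _
      have hp := p.2
      omega⟩⟩
  invFun x := ⟨(fun i => 2 * x.2.1.1 i + if i ∈ x.1 then 1 else 0, x.2.1.2), by
      dsimp only
      have key : ∑ i, (2 * x.2.1.1 i + if i ∈ x.1 then 1 else 0) =
          2 * (∑ i, x.2.1.1 i) + x.1.card := by
        rw [Finset.sum_add_distrib, ← Finset.mul_sum]
        congr 1
        rw [Finset.sum_ite_mem, Finset.univ_inter, Finset.card_eq_sum_ones]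
      have hx := x.2.2
      omega⟩
  left_inv p := by
    apply Subtype.ext
    apply Prod.ext
    · funext i
      simp only [Finset.mem_filter, Finset.mem_univ, true_and]
      exact (split_aux _).symm
    · rfl
  right_inv x := by
    refine Sigma.subtype_ext ?_ ?_
    · ext i
      simp only [Finset.mem_filter, Finset.mem_univ, true_and]
      by_cases h : i ∈ x.1 <;> simp [h] <;> omega
    · apply Prod.ext
      · funext i
        by_cases h : i ∈ x.1 <;> simp [h] <;> omega
      · rfl

/-- `C(m; j)` : equals `(1/j!)·m(m+1)···(m+j-1)` if `m > 0`, and `0` otherwise. -/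
def Cm (m : ℤ) (j : ℕ) : ℕ := if 0 < m then Nat.choose (m.toNat + j - 1) j else 0

theorem stmt13 (n : ℕ) (hn : 2 ≤ n) (b : ℕ) (hb : Odd b) :
    Nat.card {p : (Fin (n - 1) → ℕ) × ℕ // (∑ i, p.1 i) + 2 * p.2 = b} =
      ∑ k ∈ Finset.range ((n - 2) / 2 + 1),
        Nat.choose (n - 1) (2 * k + 1) * Cm ((b / 2 : ℕ) - (k : ℤ) + 1) (n - 1) := by
  obtain ⟨m, rfl⟩ : ∃ m, n = m + 2 := ⟨n - 2, by omega⟩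
  obtain ⟨b', rfl⟩ : ∃ b', b = 2 * b' + 1 := by
    obtain ⟨c, hc⟩ := hb; exact ⟨c, by omega⟩
  have e1 : m + 2 - 1 = m + 1 := rfl
  have e2 : m + 2 - 2 = m := rfl
  have e3 : (2 * b' + 1) / 2 = b' := by omega
  rw [e1, e2, e3]
  rw [Nat.card_congr (mainEquiv (m+1) (2*b'+1))]
  haveI : ∀ S : Finset (Fin (m+1)),
      Finite {q : (Fin (m+1) → ℕ) × ℕ // 2*((∑ i, q.1 i) + q.2) + S.card = 2*b'+1} :=
    fun S => fiber_finite (m+1) S.card (2*b'+1)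
  rw [nat_card_sigma]
  set g : ℕ → ℕ := fun c =>
    Nat.card {q : (Fin (m+1) → ℕ) × ℕ // 2*((∑ i, q.1 i) + q.2) + c = 2*b'+1} with hg
  have step1 : ∑ S : Finset (Fin (m+1)),
      Nat.card {q : (Fin (m+1) → ℕ) × ℕ // 2*((∑ i, q.1 i) + q.2) + S.card = 2*b'+1} =
      ∑ c ∈ Finset.range (m + 2), (m+1).choose c * g c := by
    rw [← Finset.powerset_univ, Finset.sum_powerset_apply_card g]
    simp [Finset.card_univ]
  rw [step1]
  have hzero : ∀ c, ¬ Odd c → (m+1).choose c * g c = 0 := by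
    intro c hc
    have : IsEmpty {q : (Fin (m+1) → ℕ) × ℕ // 2*((∑ i, q.1 i) + q.2) + c = 2*b'+1} := by
      refine ⟨fun q => ?_⟩
      have hq := q.2
      rw [Nat.odd_iff] at hc
      omega
    rw [hg]
    simp [Nat.card_of_isEmpty]
  have step2 : ∑ c ∈ Finset.range (m + 2), (m+1).choose c * g c =
      ∑ c ∈ Finset.range (2 * (m/2 + 1) + 1), (m+1).choose c * g c := by
    refine Finset.sum_subset (Finset.range_subset_range.2 (by omega)) ?_
    intro c hc hc2
    rw [Nat.choose_eq_zero_of_lt (by simp only [Finset.mem_range] at hc hc2 ⊢; omega), zero_mul]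
  rw [step2, sum_odd_aux _ hzero (m/2 + 1)]
  refine Finset.sum_congr rfl fun k hk => ?_
  congr 1
  by_cases hkb : k ≤ b'
  · have h1 : g (2*k+1) = Nat.card
        {q : (Fin (m+1) → ℕ) × ℕ // (∑ i, q.1 i) + q.2 = b' - k} := by
      rw [hg]
      exact Nat.card_congr (fiberEquiv (m+1) (2*k+1) (2*b'+1) (b'-k) (by omega))
    rw [h1, card_pair]
    simp only [Cm]
    rw [if_pos (show (0:ℤ) < (b':ℤ) - (k:ℤ) + 1 by omega)]
    have ht : ((b' : ℤ) - k + 1).toNat = b' - k + 1 := by omega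
    rw [ht]
    have h2 : m + 1 + 1 + (b' - k) - 1 = m + 1 + (b' - k) := by omega
    have h3 : b' - k + 1 + (m + 1) - 1 = m + 1 + (b' - k) := by omega
    rw [h2, h3]
    exact Nat.choose_symm_of_eq_add (by omega)
  · have h1 : g (2*k+1) = 0 := by
      have : IsEmpty {q : (Fin (m+1) → ℕ) × ℕ // 2*((∑ i, q.1 i) + q.2) + (2*k+1) = 2*b'+1} :=
        ⟨fun q => by have := q.2; omega⟩
      rw [hg]; exact Nat.card_of_isEmpty
    rw [h1]
    simp only [Cm]
    rw [if_neg (show ¬ (0:ℤ) < (b':ℤ) - (k:ℤ) + 1 by omega)]
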